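/- arXiv:2312.17022 — 7 statements merged into one kernel-verified Lean document; each statement's English description precedes it below -/
import Mathlib

section
/- (Kelly's Lemma) If G and H are graphs on n vertices with a common deck (i.e., there is a bijection σ : V(G) → V(H) with G − v ≅ H − σ(v) for all v), then for every graph F with fewer than n vertices, s(F, G) = s(F, H). -/
open SimpleGraph Finset

/-- `s(F,G)`: the number of subgraphs of `G` isomorphic to `F`. -/
noncomputable def subCount {W V : Type*} (F : SimpleGraph W) (G : SimpleGraph V) : ℕ :=
  Nat.card {H : G.Subgraph // Nonempty (H.coe ≃g F)}

/-- `i(F,G)`: the number of induced subgraphs of `G` isomorphic to `F`. -/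
noncomputable def indCount {W V : Type*} (F : SimpleGraph W) (G : SimpleGraph V) : ℕ :=
  Nat.card {H : G.Subgraph // H.IsInduced ∧ Nonempty (H.coe ≃g F)}

/-- `s(F,G^v)`: subgraphs of `G` isomorphic to `F` that contain `v`. -/
noncomputable def subCountAt {W V : Type*} (F : SimpleGraph W) (G : SimpleGraph V) (v : V) : ℕ :=
  Nat.card {H : G.Subgraph // v ∈ H.verts ∧ Nonempty (H.coe ≃g F)}

/-- `i(F,G^v)`: induced subgraphs of `G` isomorphic to `F` that contain `v`. -/
noncomputable def indCountAt {W V : Type*} (F : SimpleGraph W) (G : SimpleGraph V) (v : V) : ℕ :=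
  Nat.card {H : G.Subgraph // H.IsInduced ∧ v ∈ H.verts ∧ Nonempty (H.coe ≃g F)}

/-- `s(F^x,G^v)`: subgraphs `H` of `G` containing `v` with a rooted isomorphism
`H^v ≅ F^x` (an isomorphism `H ≃g F` sending `v` to `x`). -/
noncomputable def rootedCountAt {W V : Type*} (F : SimpleGraph W) (x : W)
    (G : SimpleGraph V) (v : V) : ℕ :=
  Nat.card {H : G.Subgraph // ∃ hv : v ∈ H.verts, ∃ e : H.coe ≃g F, e ⟨v, hv⟩ = x}

/-- `i(F^x,G^v)`: induced subgraphs `H` of `G` containing `v` with `H^v ≅ F^x`. -/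
noncomputable def indRootedCountAt {W V : Type*} (F : SimpleGraph W) (x : W)
    (G : SimpleGraph V) (v : V) : ℕ :=
  Nat.card {H : G.Subgraph //
    H.IsInduced ∧ ∃ hv : v ∈ H.verts, ∃ e : H.coe ≃g F, e ⟨v, hv⟩ = x}

/-- `s(F^x,G)`: rooted-subgraph occurrences of `F^x` in `G`, root anywhere:
pairs `(H, w)` with `H` a subgraph of `G`, `w ∈ V(H)` and `H^w ≅ F^x`. -/
noncomputable def rootedCount {W V : Type*} (F : SimpleGraph W) (x : W)
    (G : SimpleGraph V) : ℕ :=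
  Nat.card {p : G.Subgraph × V //
    ∃ hv : p.2 ∈ p.1.verts, ∃ e : p.1.coe ≃g F, e ⟨p.2, hv⟩ = x}

/-- The vertex-deleted subgraph `G - v`. -/
def deleteVert {V : Type*} (G : SimpleGraph V) (v : V) :
    SimpleGraph {w : V // w ∈ ({w | w ≠ v} : Set V)} :=
  G.induce {w | w ≠ v}

/-- The radius of `G`, valued in `ℕ∞` (infinite if `G` is disconnected). -/
noncomputable def eradius {V : Type*} (G : SimpleGraph V) : ℕ∞ :=
  ⨅ v, ⨆ w, G.edist v w

/-- Isomorphism of rooted graphs. -/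
def RootedIso {α β : Type*} (A : SimpleGraph α) (a : α) (B : SimpleGraph β) (b : β) : Prop :=
  ∃ e : A ≃g B, e a = b

section Aux

variable {α β : Type*} {A : SimpleGraph α} {B : SimpleGraph β}

/-- `Finite` instance for subgraphs of a graph on a finite vertex type. -/
instance aux_finite_subgraph [Finite α] : Finite A.Subgraph := by
  have hinj : Function.Injective (fun H : A.Subgraph => (H.verts, H.Adj)) := by
    intro H K h
    exact SimpleGraph.Subgraph.ext (congrArg Prod.fst h) (congrArg Prod.snd h)
  exact Finite.of_injective _ hinj

/-- Mapping a subgraph along a graph embedding gives an isomorphic coe. -/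
noncomputable def auxCoeMapIso (f : A ↪g B) (H : A.Subgraph) :
    H.coe ≃g (H.map f.toHom).coe where
  toEquiv := (Equiv.Set.image f H.verts f.injective)
  map_rel_iff' := by
    intro a b
    simp only [Subgraph.coe_adj, Subgraph.map_adj, Equiv.Set.image_apply, Relation.Map]
    constructor
    · rintro ⟨u, v, h, hu, hv⟩
      rwa [f.injective hu, f.injective hv] at h
    · intro h
      exact ⟨a, b, h, rfl, rfl⟩

lemma aux_map_symm_map (e : A ≃g B) (H : A.Subgraph) :
    (H.map e.toHom).map e.symm.toHom = H := by
  rw [← Subgraph.map_comp, Iso.symm_toHom_comp_toHom, Subgraph.map_id]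

lemma aux_map_map_symm (e : A ≃g B) (H : B.Subgraph) :
    (H.map e.symm.toHom).map e.toHom = H := by
  rw [← Subgraph.map_comp, Iso.toHom_comp_symm_toHom, Subgraph.map_id]

/-- subCount is invariant under isomorphism of the big graph. -/
lemma aux_subCount_congr {γ : Type*} (F : SimpleGraph γ) (e : A ≃g B) :
    subCount F A = subCount F B := by
  apply Nat.card_congr
  refine Equiv.mk
    (fun p => ⟨p.1.map e.toHom, p.2.elim fun i =>
      ⟨i.comp (auxCoeMapIso e.toEmbedding p.1).symm⟩⟩)
    (fun p => ⟨p.1.map e.symm.toHom, p.2.elim fun i =>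
      ⟨i.comp (auxCoeMapIso e.symm.toEmbedding p.1).symm⟩⟩)
    (fun p => Subtype.ext (aux_map_symm_map e p.1))
    (fun p => Subtype.ext (aux_map_map_symm e p.1))

/-- The restriction of a subgraph whose vertices lie in `S` to a subgraph of `A.induce S`. -/
def auxRestrict (S : Set α) (H : A.Subgraph) : (A.induce S).Subgraph where
  verts := {a | ↑a ∈ H.verts}
  Adj a b := H.Adj ↑a ↑b
  adj_sub h := H.adj_sub h
  edge_vert h := H.edge_vert h
  symm := ⟨fun a b h => H.adj_symm h⟩

/-- The embedding of `A.induce S` into `A`. -/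
def auxInduceEmb (S : Set α) : (A.induce S) ↪g A where
  toFun := Subtype.val
  inj' := Subtype.val_injective
  map_rel_iff' := Iff.rfl

noncomputable def auxRestrictCoeIso (S : Set α) (H : A.Subgraph) (hS : H.verts ⊆ S) :
    (auxRestrict S H).coe ≃g H.coe where
  toFun a := ⟨a.1.1, a.2⟩
  invFun x := ⟨⟨↑x, hS x.2⟩, x.2⟩
  left_inv a := rfl
  right_inv x := rfl
  map_rel_iff' := @fun a b => Iff.rfl

lemma aux_map_restrict (S : Set α) (H : A.Subgraph) (hS : H.verts ⊆ S) :
    (auxRestrict S H).map (auxInduceEmb S).toHom = H := by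
  apply SimpleGraph.Subgraph.ext
  · ext x
    simp only [Subgraph.map_verts, Set.mem_image]
    constructor
    · rintro ⟨a, ha, rfl⟩; exact ha
    · intro hx; exact ⟨⟨x, hS hx⟩, hx, rfl⟩
  · ext x y
    simp only [Subgraph.map_adj, Relation.Map]
    constructor
    · rintro ⟨a, b, h, rfl, rfl⟩; exact h
    · intro h
      exact ⟨⟨x, hS (H.edge_vert h)⟩, ⟨y, hS (H.edge_vert (H.adj_symm h))⟩, h, rfl, rfl⟩

lemma aux_restrict_map (S : Set α) (K : (A.induce S).Subgraph) :
    auxRestrict S (K.map (auxInduceEmb S).toHom) = K := by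
  apply SimpleGraph.Subgraph.ext
  · ext a
    simp only [auxRestrict, Subgraph.map_verts, Set.mem_image, Set.mem_setOf_eq]
    constructor
    · rintro ⟨b, hb, h⟩
      rwa [Subtype.val_injective h] at hb
    · intro ha; exact ⟨a, ha, rfl⟩
  · ext a b
    show Relation.Map K.Adj _ _ _ _ ↔ K.Adj a b
    constructor
    · rintro ⟨u, v, h, hu, hv⟩
      rwa [Subtype.val_injective hu, Subtype.val_injective hv] at h
    · intro h; exact ⟨a, b, h, rfl, rfl⟩

lemma aux_subCount_induce {γ : Type*} (F : SimpleGraph γ) (S : Set α) :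
    subCount F (A.induce S) =
      Nat.card {H : A.Subgraph // H.verts ⊆ S ∧ Nonempty (H.coe ≃g F)} := by
  apply Nat.card_congr
  refine Equiv.mk
    (fun p => ⟨p.1.map (auxInduceEmb S).toHom,
      ?_,
      p.2.elim fun i => ⟨i.comp (auxCoeMapIso (auxInduceEmb S) p.1).symm⟩⟩)
    (fun p => ⟨auxRestrict S p.1, p.2.2.elim fun i =>
      ⟨i.comp (auxRestrictCoeIso S p.1 p.2.1)⟩⟩)
    (fun p => Subtype.ext (aux_restrict_map S p.1))
    (fun p => Subtype.ext (aux_map_restrict S p.1 p.2.1))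
  · rintro _ ⟨a, ha, rfl⟩
    exact a.2

end Aux


lemma aux_key {V W : Type*} [Fintype V] [Fintype W] (G : SimpleGraph V) (F : SimpleGraph W) :
    ∑ v : V, subCount F (deleteVert G v) =
      (Fintype.card V - Fintype.card W) * subCount F G := by
  classical
  have hterm : ∀ v : V, subCount F (deleteVert G v) =
      Nat.card {H : G.Subgraph // v ∉ H.verts ∧ Nonempty (H.coe ≃g F)} := by
    intro v
    rw [show deleteVert G v = G.induce {w | w ≠ v} from rfl, aux_subCount_induce]
    apply Nat.card_congr
    apply Equiv.subtypeEquivRight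
    intro H
    constructor
    · rintro ⟨h1, h2⟩; exact ⟨fun hv => h1 hv rfl, h2⟩
    · rintro ⟨h1, h2⟩; exact ⟨fun w hw hwv => h1 (hwv ▸ hw), h2⟩
  simp only [hterm]
  set A := fun v : V => {H : G.Subgraph // v ∉ H.verts ∧ Nonempty (H.coe ≃g F)} with hA
  set B := {H : G.Subgraph // Nonempty (H.coe ≃g F)} with hB
  haveI : ∀ v, Fintype (A v) := fun v => Fintype.ofFinite _
  haveI : Fintype B := Fintype.ofFinite _
  haveI : ∀ H : B, Fintype {v : V // v ∉ H.1.verts} := fun H => Fintype.ofFinite _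
  have h1 : ∀ v, Nat.card (A v) = Fintype.card (A v) := fun _ => Nat.card_eq_fintype_card
  rw [Finset.sum_congr rfl (fun v _ => h1 v)]
  have e : (Σ v, A v) ≃ (Σ H : B, {v : V // v ∉ H.1.verts}) :=
    Equiv.mk (fun p => ⟨⟨p.2.1, p.2.2.2⟩, p.1, p.2.2.1⟩)
      (fun q => ⟨q.2.1, q.1.1, q.2.2, q.1.2⟩)
      (fun p => rfl) (fun q => rfl)
  have h2 : ∑ v, Fintype.card (A v) = Fintype.card (Σ v, A v) :=
    Fintype.card_sigma.symm
  rw [h2, Fintype.card_congr e, Fintype.card_sigma]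
  have h3 : ∀ H : B, Fintype.card {v : V // v ∉ H.1.verts} =
      Fintype.card V - Fintype.card W := by
    intro H
    obtain ⟨i⟩ := H.2
    have hv : Fintype.card {v : V // v ∈ H.1.verts} = Fintype.card W := by
      rw [← Nat.card_eq_fintype_card, Nat.card_congr i.toEquiv, Nat.card_eq_fintype_card]
    rw [Fintype.card_subtype_compl, hv]
  rw [Finset.sum_congr rfl (fun H _ => h3 H), Finset.sum_const, smul_eq_mul,
    Finset.card_univ, mul_comm]
  congr 1
  rw [subCount, Nat.card_eq_fintype_card]

/-- Kelly's Lemma: if `G` and `H` have a common deck via a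
bijection `σ`, then `s(F, G) = s(F, H)` for every `F` with fewer vertices. -/
theorem stmt5 {V V' W : Type*} [Fintype V] [Fintype V'] [Fintype W]
    (G : SimpleGraph V) (H : SimpleGraph V') (sigma : V ≃ V')
    (hdeck : ∀ v : V, Nonempty (deleteVert G v ≃g deleteVert H (sigma v)))
    (F : SimpleGraph W) (hF : Fintype.card W < Fintype.card V) :
    subCount F G = subCount F H := by
  classical
  have hc : Fintype.card V' = Fintype.card V := (Fintype.card_congr sigma.symm)
  have hG := aux_key G F
  have hH := aux_key H F
  have hsum : ∑ v : V, subCount F (deleteVert G v)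
      = ∑ v' : V', subCount F (deleteVert H v') :=
    Fintype.sum_equiv sigma _ _ (fun v => aux_subCount_congr F (hdeck v).some)
  rw [hG, hH, hc] at hsum
  exact Nat.eq_of_mul_eq_mul_left (by omega) hsum
end

section
/- (Kelly's Lemma, induced version) If G and H are graphs on n vertices with a common deck, then for every graph F with fewer than n vertices, i(F, G) = i(F, H). -/
open SimpleGraph Finset

/-! ### Auxiliary lemmas for Kelly's Lemma -/

/-- An induced subgraph's coe is isomorphic to the induce of its vertex set. -/
def kelly_isoOfInduced {V : Type*} {G : SimpleGraph V} {H : G.Subgraph} (h : H.IsInduced) :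
    G.induce H.verts ≃g H.coe :=
  ⟨Equiv.refl _, by
    intro a b
    simp only [Equiv.refl_apply, comap_adj, Function.Embedding.coe_subtype, Subgraph.coe_adj]
    exact ⟨fun hadj => H.adj_sub hadj, fun hadj => h a.2 b.2 hadj⟩⟩

/-- An isomorphism restricts to induced subgraphs on a set and its image. -/
def kelly_isoInduceImage {α β : Type*} {A : SimpleGraph α} {B : SimpleGraph β}
    (e : A ≃g B) (S : Set α) : A.induce S ≃g B.induce (⇑e '' S) :=
  ⟨e.toEquiv.image S, by intro a b; simp [Equiv.image, e.map_adj_iff]⟩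

/-- Induce of induce is induce of the image. -/
noncomputable def kelly_isoInduceInduce {V : Type*} (G : SimpleGraph V) (A : Set V) (S : Set A) :
    (G.induce A).induce S ≃g G.induce (Subtype.val '' S) :=
  ⟨Equiv.Set.image Subtype.val S Subtype.val_injective, by
    intro a b
    simp [Equiv.Set.image, Equiv.Set.imageOfInjOn]⟩

/-- Coe of the top induced subgraph is the induced graph. -/
def kelly_isoTopInduce {V : Type*} (G : SimpleGraph V) (S : Set V) :
    ((⊤ : G.Subgraph).induce S).coe ≃g G.induce S := by
  rw [SimpleGraph.induce_eq_coe_induce_top]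
  exact RelIso.refl _

/-- A trivial iso from set equality. -/
def kelly_isoOfEq {V : Type*} (G : SimpleGraph V) {S T : Set V} (h : S = T) :
    G.induce S ≃g G.induce T := by subst h; exact RelIso.refl _

lemma kelly_indCount_eq_sets {W V : Type*} (F : SimpleGraph W) (G : SimpleGraph V) :
    indCount F G = Nat.card {S : Set V // Nonempty (G.induce S ≃g F)} := by
  apply Nat.card_congr
  refine ⟨fun H => ⟨H.1.verts, H.2.2.elim fun e => ⟨e.comp (kelly_isoOfInduced H.2.1)⟩⟩,
    fun S => ⟨(⊤ : G.Subgraph).induce S.1,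
      ⟨fun _ hu _ hv hadj => ⟨hu, hv, hadj⟩,
       S.2.elim fun e => ⟨e.comp (kelly_isoTopInduce G S.1)⟩⟩⟩, ?_, ?_⟩
  · rintro ⟨H, hind, hiso⟩
    ext1
    apply SimpleGraph.Subgraph.ext
    · rfl
    · ext u v
      simp only [Subgraph.induce_adj, Subgraph.top_adj]
      exact ⟨fun ⟨hu, hv, hadj⟩ => hind hu hv hadj,
        fun hadj => ⟨H.edge_vert hadj, H.edge_vert hadj.symm, H.adj_sub hadj⟩⟩
  · rintro ⟨S, hS⟩
    rfl

lemma kelly_sets_iso {α β W : Type*} {A : SimpleGraph α} {B : SimpleGraph β} (F : SimpleGraph W)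
    (e : A ≃g B) :
    Nat.card {S : Set α // Nonempty (A.induce S ≃g F)}
      = Nat.card {S : Set β // Nonempty (B.induce S ≃g F)} := by
  apply Nat.card_congr
  refine ⟨fun S => ⟨⇑e '' S.1, S.2.elim fun f => ⟨f.comp (kelly_isoInduceImage e S.1).symm⟩⟩,
    fun S => ⟨⇑e.symm '' S.1, S.2.elim fun f => ⟨f.comp (kelly_isoInduceImage e.symm S.1).symm⟩⟩,
    ?_, ?_⟩
  · rintro ⟨S, hS⟩
    ext1
    simp [Set.image_image]
  · rintro ⟨S, hS⟩
    ext1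
    simp [Set.image_image]

lemma kelly_indCount_iso {α β W : Type*} {A : SimpleGraph α} {B : SimpleGraph β}
    (F : SimpleGraph W) (e : A ≃g B) : indCount F A = indCount F B := by
  rw [kelly_indCount_eq_sets, kelly_indCount_eq_sets, kelly_sets_iso F e]

lemma kelly_deleteVert_count {W V : Type*} (F : SimpleGraph W) (G : SimpleGraph V) (v : V) :
    indCount F (deleteVert G v)
      = Nat.card {T : Set V // v ∉ T ∧ Nonempty (G.induce T ≃g F)} := by
  rw [kelly_indCount_eq_sets]
  apply Nat.card_congr
  have hrange : Set.range (Subtype.val : ({w : V | w ≠ v}) → V) = {w : V | w ≠ v} :=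
    Subtype.range_coe
  refine ⟨fun S => ⟨Subtype.val '' S.1, ?_, S.2.elim fun f =>
      ⟨f.comp (kelly_isoInduceInduce G _ S.1).symm⟩⟩,
    fun T => ⟨Subtype.val ⁻¹' T.1, T.2.2.elim fun f => ⟨f.comp
      ((kelly_isoInduceInduce G {w : V | w ≠ v} (Subtype.val ⁻¹' T.1)).trans
        (kelly_isoOfEq G ?_))⟩⟩, ?_, ?_⟩
  · rintro ⟨w, hw, hwv⟩
    exact w.2 hwv
  · rw [Set.image_preimage_eq_inter_range, hrange]
    rw [Set.inter_eq_left]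
    intro w hw
    rintro rfl
    exact T.2.1 hw
  · rintro ⟨S, hS⟩
    ext1
    show Subtype.val ⁻¹' (Subtype.val '' S) = S
    exact Set.preimage_image_eq S Subtype.val_injective
  · rintro ⟨T, hT, hiso⟩
    ext1
    show Subtype.val '' (Subtype.val ⁻¹' T) = T
    rw [Set.image_preimage_eq_inter_range, hrange, Set.inter_eq_left]
    intro w hw
    rintro rfl
    exact hT hw

lemma kelly_sum_card {V : Type*} [Fintype V] (P : Set V → Prop) (k : ℕ)
    (hk : ∀ T, P T → Nat.card T = k) :
    ∑ v : V, Nat.card {T : Set V // v ∉ T ∧ P T}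
      = (Fintype.card V - k) * Nat.card {T : Set V // P T} := by
  classical
  have e : (Σ v : V, {T : Set V // v ∉ T ∧ P T})
      ≃ (Σ T : {T : Set V // P T}, {v : V // v ∉ T.1}) :=
    { toFun := fun p => ⟨⟨p.2.1, p.2.2.2⟩, ⟨p.1, p.2.2.1⟩⟩
      invFun := fun p => ⟨p.2.1, ⟨p.1.1, p.2.2, p.1.2⟩⟩
      left_inv := fun p => rfl
      right_inv := fun p => rfl }
  have h1 : ∑ v : V, Nat.card {T : Set V // v ∉ T ∧ P T}
      = Nat.card (Σ v : V, {T : Set V // v ∉ T ∧ P T}) := by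
    rw [Nat.card_eq_fintype_card, Fintype.card_sigma]
    exact Finset.sum_congr rfl fun v _ => Nat.card_eq_fintype_card
  rw [h1, Nat.card_congr e, Nat.card_eq_fintype_card, Fintype.card_sigma]
  have h2 : ∀ T : {T : Set V // P T}, Fintype.card {v : V // v ∉ T.1}
      = Fintype.card V - k := by
    intro T
    have : Fintype.card {v : V // v ∈ T.1} = k := by
      rw [← Nat.card_eq_fintype_card]
      exact hk T.1 T.2
    rw [Fintype.card_subtype_compl, this]
  rw [Finset.sum_congr rfl fun T _ => h2 T, Finset.sum_const, smul_eq_mul,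
    Finset.card_univ, Nat.card_eq_fintype_card, mul_comm]

lemma kelly_main {W V : Type*} [Fintype V] [Fintype W] (F : SimpleGraph W) (G : SimpleGraph V) :
    ∑ v : V, indCount F (deleteVert G v)
      = (Fintype.card V - Fintype.card W) * indCount F G := by
  classical
  rw [kelly_indCount_eq_sets]
  rw [Finset.sum_congr rfl fun v _ => kelly_deleteVert_count F G v]
  apply kelly_sum_card
  intro T hT
  obtain ⟨f⟩ := hT
  rw [Nat.card_congr f.toEquiv, Nat.card_eq_fintype_card]

/-- Kelly's Lemma, induced version. -/
theorem stmt6 {V V' W : Type*} [Fintype V] [Fintype V'] [Fintype W]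
    (G : SimpleGraph V) (H : SimpleGraph V') (sigma : V ≃ V')
    (hdeck : ∀ v : V, Nonempty (deleteVert G v ≃g deleteVert H (sigma v)))
    (F : SimpleGraph W) (hF : Fintype.card W < Fintype.card V) :
    indCount F G = indCount F H := by
  classical
  have hcard : Fintype.card V = Fintype.card V' := Fintype.card_congr sigma
  have h1 := kelly_main F G
  have h2 := kelly_main F H
  have h3 : ∑ v : V, indCount F (deleteVert G v) = ∑ v' : V', indCount F (deleteVert H v') := by
    rw [← Equiv.sum_comp sigma (fun v' => indCount F (deleteVert H v'))]
    exact Finset.sum_congr rfl fun v _ => (hdeck v).elim fun e => kelly_indCount_iso F e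
  rw [h1, h2, ← hcard] at h3
  have hpos : 0 < Fintype.card V - Fintype.card W := Nat.sub_pos_of_lt hF
  exact Nat.eq_of_mul_eq_mul_left hpos h3
end

section
/- (Kelly's Lemma, rooted version) Suppose G and H are graphs on n vertices and σ : V(G) → V(H) is a hypomorphism (G − v ≅ H − σ(v) for all v). Then for every graph F with v(F) < n and every v ∈ V(G), s(F, G^v) = s(F, H^{σ(v)}). -/
open SimpleGraph Finset

instance kellyFinite {V : Type*} [Finite V] (G : SimpleGraph V) : Finite G.Subgraph :=
  Finite.of_injective (fun H => (H.verts, H.Adj)) (by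
    intro a b h
    rw [Prod.mk.injEq] at h
    exact SimpleGraph.Subgraph.ext h.1 h.2)

noncomputable def kellyMapIso {α β : Type*} {A : SimpleGraph α} {B : SimpleGraph β} (f : A ↪g B)
    (K : A.Subgraph) : K.coe ≃g (K.map f.toHom).coe where
  toEquiv := Equiv.Set.image f K.verts f.injective
  map_rel_iff' := by
    intro ⟨a, ha⟩ ⟨b, hb⟩
    constructor
    · rintro ⟨u, w, h, hu, hw⟩
      rw [f.injective hu, f.injective hw] at h
      exact h
    · intro h
      exact ⟨a, b, h, rfl, rfl⟩

/-- subgraphs transported along an iso -/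
def kellySubEquiv {α β : Type*} {A : SimpleGraph α} {B : SimpleGraph β} (e : A ≃g B) :
    A.Subgraph ≃ B.Subgraph where
  toFun K := K.map e.toHom
  invFun K := K.map e.symm.toHom
  left_inv K := by
    show (K.map e.toHom).map e.symm.toHom = K
    rw [← SimpleGraph.Subgraph.map_comp]
    have : (e.symm.toHom.comp e.toHom) = SimpleGraph.Hom.id := by
      ext x; exact e.symm_apply_apply x
    rw [this, SimpleGraph.Subgraph.map_id]
  right_inv K := by
    show (K.map e.symm.toHom).map e.toHom = K
    rw [← SimpleGraph.Subgraph.map_comp]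
    have : (e.toHom.comp e.symm.toHom) = SimpleGraph.Hom.id := by
      ext x; exact e.apply_symm_apply x
    rw [this, SimpleGraph.Subgraph.map_id]

lemma kellySubCount_iso {γ α β : Type*} (F : SimpleGraph γ)
    {A : SimpleGraph α} {B : SimpleGraph β} (e : A ≃g B) :
    subCount F A = subCount F B := by
  apply Nat.card_congr
  apply Equiv.subtypeEquiv (kellySubEquiv e)
  intro K
  constructor
  · rintro ⟨i⟩
    exact ⟨((kellyMapIso e.toEmbedding K).symm.trans i)⟩
  · rintro ⟨i⟩
    exact ⟨((kellyMapIso e.toEmbedding K).trans i)⟩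

def kellyIncl {V : Type*} (G : SimpleGraph V) (s : Set V) : G.induce s ↪g G :=
  ⟨Function.Embedding.subtype _, Iff.rfl⟩

noncomputable def kellyDelEquiv {V : Type*} (G : SimpleGraph V) (v : V) :
    (deleteVert G v).Subgraph ≃ {H : G.Subgraph // v ∉ H.verts} where
  toFun K := ⟨K.map (kellyIncl G _).toHom, by
    rintro ⟨⟨w, hw⟩, _, h⟩
    exact hw h⟩
  invFun H := (H.1).comap (kellyIncl G _).toHom
  left_inv K := by
    ext x y
    · simp only [Subgraph.comap_verts, Subgraph.map_verts]
      change x ∈ Subtype.val ⁻¹' (Subtype.val '' K.verts) ↔ x ∈ K.verts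
      rw [Set.preimage_image_eq _ Subtype.val_injective]
    · simp only [Subgraph.comap_adj, Subgraph.map_adj, Relation.Map]
      constructor
      · rintro ⟨_, u, w, h, hu, hw⟩
        rwa [Subtype.val_injective hu, Subtype.val_injective hw] at h
      · intro h
        exact ⟨K.adj_sub h, x, y, h, rfl, rfl⟩
  right_inv H := by
    ext x y
    · simp only [Subgraph.map_verts, Subgraph.comap_verts]
      change x ∈ Subtype.val '' (Subtype.val ⁻¹' H.1.verts) ↔ x ∈ H.1.verts
      rw [Set.image_preimage_eq_inter_range]
      constructor
      · exact fun h => h.1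
      · intro h
        refine ⟨h, ⟨x, fun hx => H.2 (hx ▸ h)⟩, rfl⟩
    · simp only [Subgraph.map_adj, Relation.Map, Subgraph.comap_adj]
      constructor
      · rintro ⟨u, w, ⟨_, h⟩, rfl, rfl⟩
        exact h
      · intro h
        have hx : x ≠ v := fun hx => H.2 (hx ▸ H.1.edge_vert h)
        have hy : y ≠ v := fun hy => H.2 (hy ▸ H.1.edge_vert (H.1.adj_symm h))
        exact ⟨⟨x, hx⟩, ⟨y, hy⟩, ⟨H.1.adj_sub h, h⟩, rfl, rfl⟩

lemma kellySubCount_del {W V : Type*} (F : SimpleGraph W) (G : SimpleGraph V) (v : V) :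
    subCount F (deleteVert G v) =
      Nat.card {H : G.Subgraph // v ∉ H.verts ∧ Nonempty (H.coe ≃g F)} := by
  apply Nat.card_congr
  refine Equiv.trans ?_ ((Equiv.subtypeSubtypeEquivSubtypeInter
    (fun H : G.Subgraph => v ∉ H.verts) (fun H => Nonempty (H.coe ≃g F))))
  apply Equiv.subtypeEquiv (kellyDelEquiv G v)
  intro K
  constructor
  · rintro ⟨i⟩
    exact ⟨((kellyMapIso (kellyIncl G _) K).symm.trans i)⟩
  · rintro ⟨i⟩
    exact ⟨((kellyMapIso (kellyIncl G _) K).trans i)⟩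

lemma kellySplit {W V : Type*} [Fintype V] (F : SimpleGraph W) (G : SimpleGraph V) (v : V) :
    subCount F G = subCountAt F G v + subCount F (deleteVert G v) := by
  classical
  rw [kellySubCount_del]
  unfold subCount subCountAt
  rw [← Nat.card_sum]
  apply Nat.card_congr
  refine Equiv.trans ((Equiv.sumCompl (fun x : {H : G.Subgraph // Nonempty (H.coe ≃g F)} =>
    v ∈ x.1.verts)).symm) ?_
  refine Equiv.sumCongr ?_ ?_
  · exact (Equiv.subtypeSubtypeEquivSubtypeExists _ _).trans
      (Equiv.subtypeEquivRight (fun H => by tauto))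
  · exact (Equiv.subtypeSubtypeEquivSubtypeExists _ _).trans
      (Equiv.subtypeEquivRight (fun H => by tauto))

lemma kellyCardSigma {ι : Type*} [Fintype ι] (f : ι → Type*) [∀ i, Finite (f i)] :
    Nat.card (Σ i, f i) = ∑ i, Nat.card (f i) := by
  letI : ∀ i, Fintype (f i) := fun i => Fintype.ofFinite (f i)
  simp [Nat.card_eq_fintype_card, Fintype.card_sigma]

lemma kellyVertsCard {W V : Type*} [Fintype W] {F : SimpleGraph W} {G : SimpleGraph V}
    {H : G.Subgraph} (i : H.coe ≃g F) : Nat.card H.verts = Fintype.card W := by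
  rw [Nat.card_congr i.toEquiv, Nat.card_eq_fintype_card]

lemma kellyHandshake {W V : Type*} [Fintype V] [Fintype W]
    (F : SimpleGraph W) (G : SimpleGraph V) :
    ∑ v : V, subCount F (deleteVert G v)
      = (Fintype.card V - Fintype.card W) * subCount F G := by
  classical
  have h1 : ∀ v, subCount F (deleteVert G v) =
      Nat.card {H : {H : G.Subgraph // Nonempty (H.coe ≃g F)} // v ∉ H.1.verts} := by
    intro v
    rw [kellySubCount_del]
    apply Nat.card_congr
    exact ((Equiv.subtypeSubtypeEquivSubtypeExists _ _).trans
      (Equiv.subtypeEquivRight (fun H => by tauto))).symm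
  simp only [h1]
  rw [← kellyCardSigma]
  have e : (Σ v : V, {H : {H : G.Subgraph // Nonempty (H.coe ≃g F)} // v ∉ H.1.verts}) ≃
      (Σ H : {H : G.Subgraph // Nonempty (H.coe ≃g F)}, {v : V // v ∉ H.1.verts}) :=
    { toFun := fun p => ⟨p.2.1, p.1, p.2.2⟩
      invFun := fun p => ⟨p.2.1, p.1, p.2.2⟩
      left_inv := fun p => rfl
      right_inv := fun p => rfl }
  letI : Fintype {H : G.Subgraph // Nonempty (H.coe ≃g F)} := Fintype.ofFinite _
  rw [Nat.card_congr e, kellyCardSigma]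
  have hcard : ∀ H : {H : G.Subgraph // Nonempty (H.coe ≃g F)},
      Nat.card {v : V // v ∉ H.1.verts} = Fintype.card V - Fintype.card W := by
    intro ⟨H, ⟨i⟩⟩
    rw [Nat.card_eq_fintype_card, Fintype.card_subtype_compl, ← kellyVertsCard i,
      Nat.card_eq_fintype_card]
  simp only [hcard]
  rw [Finset.sum_const, smul_eq_mul, mul_comm]
  congr 1
  rw [subCount, Nat.card_eq_fintype_card]
  exact (Finset.card_univ).symm

/-- Kelly's Lemma, rooted version: for a hypomorphism `σ`,
`s(F, G^v) = s(F, H^{σ(v)})`. -/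
theorem stmt7 {V V' W : Type*} [Fintype V] [Fintype V'] [Fintype W]
    (G : SimpleGraph V) (H : SimpleGraph V') (sigma : V ≃ V')
    (hdeck : ∀ v : V, Nonempty (deleteVert G v ≃g deleteVert H (sigma v)))
    (F : SimpleGraph W) (hF : Fintype.card W < Fintype.card V) (v : V) :
    subCountAt F G v = subCountAt F H (sigma v) := by
  have key : ∀ u : V, subCount F (deleteVert G u) = subCount F (deleteVert H (sigma u)) :=
    fun u => kellySubCount_iso F (hdeck u).some
  have sumEq : ∑ u : V, subCount F (deleteVert G u)
      = ∑ u' : V', subCount F (deleteVert H u') := by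
    rw [← Equiv.sum_comp sigma (fun u' => subCount F (deleteVert H u'))]
    exact Finset.sum_congr rfl fun u _ => key u
  have hn : Fintype.card V = Fintype.card V' := Fintype.card_congr sigma
  have h1 := kellyHandshake F G
  have h2 := kellyHandshake F H
  have hsub : subCount F G = subCount F H := by
    have hpos : 0 < Fintype.card V - Fintype.card W := Nat.sub_pos_of_lt hF
    apply Nat.eq_of_mul_eq_mul_left hpos
    rw [← h1, sumEq, h2, ← hn]
  have s1 := kellySplit F G v
  have s2 := kellySplit F H (sigma v)
  have := key v
  omega
end

section
/- (Kelly's Lemma, edge version) If G and H are graphs and there is a bijection τ : E(G) → E(H) with G − e ≅ H − τ(e) for all edges e, then for every graph F with e(F) < e(G), s(F, G) = s(F, H). -/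
open SimpleGraph Finset

section Aux

variable {α β : Type*} {G : SimpleGraph α} {G' : SimpleGraph β}

instance SubFin [Finite α] : Finite G.Subgraph :=
  Finite.of_injective (fun H => (H.verts, H.Adj))
    (by rintro ⟨⟩ ⟨⟩ h; simp only [Prod.mk.injEq] at h; exact Subgraph.ext h.1 h.2)

/-- image of a subgraph under an isomorphism -/
def mapSub (φ : G ≃g G') (H : G.Subgraph) : G'.Subgraph where
  verts := φ.symm ⁻¹' H.verts
  Adj a b := H.Adj (φ.symm a) (φ.symm b)
  adj_sub h := φ.symm.map_rel_iff.mp (H.adj_sub h)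
  edge_vert h := H.edge_vert h
  symm := ⟨fun a b h => H.adj_symm h⟩

lemma mapSub_inv (φ : G ≃g G') (H : G.Subgraph) : mapSub φ.symm (mapSub φ H) = H := by
  ext <;> simp [mapSub]

def coeIsoMapSub (φ : G ≃g G') (H : G.Subgraph) : H.coe ≃g (mapSub φ H).coe where
  toEquiv := φ.toEquiv.subtypeEquiv (by intro a; simp [mapSub])
  map_rel_iff' := by
    intro a b
    show H.Adj (φ.symm (φ a.1)) (φ.symm (φ b.1)) ↔ H.Adj a.1 b.1
    simp

end Aux

section Aux2

variable {α β γ : Type*} {G : SimpleGraph α} {G' : SimpleGraph β}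

lemma subCount_iso (φ : G ≃g G') (F : SimpleGraph γ) : subCount F G = subCount F G' := by
  apply Nat.card_congr
  refine Equiv.subtypeEquiv ⟨mapSub φ, mapSub φ.symm, fun H => mapSub_inv φ H,
    fun H => by simpa using mapSub_inv φ.symm H⟩ (fun H => ?_)
  exact ⟨fun ⟨e⟩ => ⟨((coeIsoMapSub φ H).symm.trans e : _)⟩,
    fun ⟨e⟩ => ⟨((coeIsoMapSub φ H).trans e : _)⟩⟩

/-- subgraphs of `G.deleteEdges s` correspond to subgraphs of `G` avoiding `s` -/
lemma subCount_deleteEdges (G : SimpleGraph α) (F : SimpleGraph γ) (s : Set (Sym2 α)) :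
    subCount F (G.deleteEdges s) =
      Nat.card {H : G.Subgraph // (∀ e ∈ s, e ∉ H.edgeSet) ∧ Nonempty (H.coe ≃g F)} := by
  apply Nat.card_congr
  refine ⟨fun K => ⟨⟨K.1.verts, K.1.Adj, fun h => ((deleteEdges_adj).mp (K.1.adj_sub h)).1,
      K.1.edge_vert, K.1.symm⟩, fun e he hmem => ?_, K.2⟩,
    fun H => ⟨⟨H.1.verts, H.1.Adj, fun {a b} h => (deleteEdges_adj).mpr
      ⟨H.1.adj_sub h, fun hs => H.2.1 _ hs (Subgraph.mem_edgeSet.mpr h)⟩,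
      H.1.edge_vert, H.1.symm⟩, H.2.2⟩, fun K => rfl, fun H => rfl⟩
  · induction e with
    | _ a b => exact ((deleteEdges_adj).mp (K.1.adj_sub (Subgraph.mem_edgeSet.mp hmem))).2 he

lemma card_edgeSet_of_iso {F : SimpleGraph γ} {H : G.Subgraph} (e : H.coe ≃g F) :
    Nat.card H.edgeSet = Nat.card F.edgeSet := by
  have h1 : H.coe.edgeSet ≃ F.edgeSet := e.mapEdgeSet
  have h2 : H.coe.edgeSet ≃ H.edgeSet := by
    refine (Equiv.Set.image (Sym2.map (Subtype.val : H.verts → α)) _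
      (Sym2.map.injective Subtype.val_injective)).trans (Equiv.setCongr ?_)
    exact H.image_coe_edgeSet_coe
  exact Nat.card_congr (h2.symm.trans h1)

end Aux2

section Aux3

variable {α γ : Type*} [Fintype α] [Fintype γ]

lemma sum_subCount_deleteEdges (G : SimpleGraph α) (F : SimpleGraph γ)
    [Fintype G.edgeSet] :
    ∑ e : G.edgeSet, subCount F (G.deleteEdges {(e : Sym2 α)}) =
      (Nat.card G.edgeSet - Nat.card F.edgeSet) * subCount F G := by
  classical
  letI : Fintype G.Subgraph := Fintype.ofFinite _
  set A := {H : G.Subgraph // Nonempty (H.coe ≃g F)} with hA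
  letI : Fintype A := Fintype.ofFinite _
  have step1 : ∀ e : G.edgeSet, subCount F (G.deleteEdges {(e : Sym2 α)}) =
      (Finset.univ.filter (fun H : A => (e : Sym2 α) ∉ H.1.edgeSet)).card := by
    intro e
    rw [subCount_deleteEdges]
    rw [← Fintype.card_subtype]
    rw [← Nat.card_eq_fintype_card]
    apply Nat.card_congr
    refine (Equiv.subtypeEquivRight (fun H => ?_)).trans
      (Equiv.subtypeSubtypeEquivSubtypeInter
        (fun H : G.Subgraph => Nonempty (H.coe ≃g F))
        (fun H => (e : Sym2 α) ∉ H.edgeSet)).symm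
    simp [and_comm]
  have step2 : ∀ H : A, (Finset.univ.filter
        (fun e : G.edgeSet => (e : Sym2 α) ∉ H.1.edgeSet)).card =
      Nat.card G.edgeSet - Nat.card F.edgeSet := by
    intro H
    rw [← Fintype.card_subtype, Fintype.card_subtype_compl]
    have h1 : Fintype.card {e : G.edgeSet // (e : Sym2 α) ∈ H.1.edgeSet} =
        Nat.card F.edgeSet := by
      rw [← Nat.card_eq_fintype_card]
      rw [Nat.card_congr (Equiv.subtypeSubtypeEquivSubtype
        (fun {x} hx => H.1.edgeSet_subset hx))]
      exact card_edgeSet_of_iso H.2.some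
    rw [h1, Nat.card_eq_fintype_card, Nat.card_eq_fintype_card]
  calc ∑ e : G.edgeSet, subCount F (G.deleteEdges {(e : Sym2 α)})
      = ∑ e : G.edgeSet, ∑ H : A, if (e : Sym2 α) ∉ H.1.edgeSet then 1 else 0 := by
        refine Finset.sum_congr rfl (fun e _ => ?_)
        rw [step1 e, Finset.card_filter]
    _ = ∑ H : A, ∑ e : G.edgeSet, if (e : Sym2 α) ∉ H.1.edgeSet then 1 else 0 :=
        Finset.sum_comm
    _ = ∑ H : A, (Nat.card G.edgeSet - Nat.card F.edgeSet) := by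
        refine Finset.sum_congr rfl (fun H _ => ?_)
        rw [← Finset.card_filter, step2 H]
    _ = (Nat.card G.edgeSet - Nat.card F.edgeSet) * subCount F G := by
        simp [subCount, Nat.card_eq_fintype_card, mul_comm]
        exact Or.inl (Fintype.card_congr (Equiv.refl _))

end Aux3


/-- Kelly's Lemma, edge version: if `G` and `H` have a common
edge deck via a bijection `τ` of edge sets, then `s(F, G) = s(F, H)` for every
`F` with fewer edges than `G`. -/
theorem stmt8 {V V' W : Type*} [Fintype V] [Fintype V'] [Fintype W]
    (G : SimpleGraph V) (H : SimpleGraph V') (tau : G.edgeSet ≃ H.edgeSet)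
    (hdeck : ∀ e : G.edgeSet,
      Nonempty (G.deleteEdges {(e : Sym2 V)} ≃g H.deleteEdges {((tau e : H.edgeSet) : Sym2 V')}))
    (F : SimpleGraph W) (hF : Nat.card F.edgeSet < Nat.card G.edgeSet) :
    subCount F G = subCount F H := by
  classical
  haveI : Fintype G.edgeSet := Fintype.ofFinite _
  haveI : Fintype H.edgeSet := Fintype.ofFinite _
  have hGH : Nat.card G.edgeSet = Nat.card H.edgeSet := Nat.card_congr tau
  have hsum : ∑ e : G.edgeSet, subCount F (G.deleteEdges {(e : Sym2 V)}) =
      ∑ f : H.edgeSet, subCount F (H.deleteEdges {(f : Sym2 V')}) := by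
    rw [← Equiv.sum_comp tau (fun f => subCount F (H.deleteEdges {(f : Sym2 V')}))]
    exact Finset.sum_congr rfl (fun e _ => subCount_iso (hdeck e).some F)
  rw [sum_subCount_deleteEdges, sum_subCount_deleteEdges, hGH] at hsum
  have hpos : 0 < Nat.card H.edgeSet - Nat.card F.edgeSet := by omega
  exact Nat.eq_of_mul_eq_mul_left hpos hsum
end

section
/- A connected graph G with at least one edge is radius-minimal (i.e., r(G − e) > r(G) for every edge e with G − e connected, and G − e is disconnected counts as having larger radius) if and only if G is a tree. -/
open SimpleGraph Finset

private lemma exists_parent {V : Type*} {G : SimpleGraph V} (hG : G.Connected)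
    {v w : V} (hw : w ≠ v) :
    ∃ p : V, G.Adj p w ∧ G.dist v p + 1 = G.dist v w := by
  obtain ⟨q, hq⟩ := hG.exists_walk_length_eq_dist w v
  cases q with
  | nil => exact absurd rfl hw
  | @cons _ p0 _ h q' =>
    refine ⟨p0, h.symm, ?_⟩
    have h1 : G.dist v p0 ≤ q'.length := by
      have := SimpleGraph.dist_le q'.reverse
      simpa [SimpleGraph.dist_comm] using this
    have h2 : q'.length + 1 = G.dist v w := by
      simpa [SimpleGraph.dist_comm] using hq
    have h3 : G.dist v w ≤ G.dist v p0 + 1 := by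
      have := hG.dist_triangle (v := p0) (u := v) (w := w)
      have h4 : G.dist p0 w ≤ 1 := by
        simpa using SimpleGraph.dist_le h.symm.toWalk
      omega
    omega

private lemma connected_card_le {V : Type*} [Fintype V] (G : SimpleGraph V)
    (hG : G.Connected) [Fintype G.edgeSet] :
    Fintype.card V ≤ G.edgeFinset.card + 1 := by
  classical
  have hne : Nonempty V := hG.nonempty
  obtain ⟨v⟩ := hne
  choose par hadj hdist using fun (w : {w : V // w ≠ v}) => exists_parent hG w.2
  let F : {w : V // w ≠ v} → G.edgeSet := fun w =>
    ⟨s(w.1, par w), (G.mem_edgeSet).mpr (hadj w).symm⟩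
  have hFinj : Function.Injective F := by
    intro a b hab
    have h : s(a.1, par a) = s(b.1, par b) := congrArg Subtype.val hab
    rw [Sym2.eq_iff] at h
    rcases h with ⟨h1, _⟩ | ⟨h1, h2⟩
    · exact Subtype.ext h1
    · have ha := hdist a
      have hb := hdist b
      rw [h2] at ha
      rw [← h1] at hb
      omega
  have hcard : Fintype.card {w : V // w ≠ v} ≤ Fintype.card G.edgeSet :=
    Fintype.card_le_of_injective F hFinj
  have hcv : Fintype.card {w : V // w ≠ v} = Fintype.card V - 1 := by
    rw [Fintype.card_subtype_compl, Fintype.card_subtype_eq]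
  have hpos : 1 ≤ Fintype.card V := @Fintype.card_pos _ _ ⟨v⟩
  rw [SimpleGraph.edgeFinset_card]
  omega

private lemma connected_deleteEdges {V : Type*} {G : SimpleGraph V} (hG : G.Connected)
    {x y : V} (hr : (G.deleteEdges {s(x, y)}).Reachable x y) :
    (G.deleteEdges {s(x, y)}).Connected := by
  have key : ∀ (a b : V), G.Walk a b → (G.deleteEdges {s(x, y)}).Reachable a b := by
    intro a b p
    induction p with
    | nil => exact Reachable.refl _
    | @cons a c b h _ ih =>
      refine Reachable.trans ?_ ih
      by_cases he : s(a, c) = s(x, y)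
      · rw [Sym2.eq_iff] at he
        rcases he with ⟨rfl, rfl⟩ | ⟨rfl, rfl⟩
        · exact hr
        · exact hr.symm
      · exact (SimpleGraph.deleteEdges_adj.mpr ⟨h, by simpa using he⟩).reachable
  have hpre : (G.deleteEdges {s(x, y)}).Preconnected := fun a b => key a b (hG a b).some
  have : Nonempty V := hG.nonempty
  exact Connected.mk hpre

private lemma exists_safe_edge {V : Type*} [Fintype V] {G : SimpleGraph V}
    (hG : G.Connected) (hnt : ¬ G.IsAcyclic) (v : V) :
    ∃ e ∈ G.edgeSet, ∀ w, (G.deleteEdges {e}).edist v w ≤ G.edist v w := by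
  classical
  choose par hadj hdist using fun (w : {w : V // w ≠ v}) => exists_parent hG w.2
  set F : {w : V // w ≠ v} → Sym2 V := fun w => s(w.1, par w) with hF
  have hFedge : ∀ w, F w ∈ G.edgeSet := fun w => (G.mem_edgeSet).mpr (hadj w).symm
  have hex : ∃ e ∈ G.edgeSet, e ∉ Set.range F := by
    by_contra hcon
    push_neg at hcon
    rw [SimpleGraph.IsAcyclic] at hnt
    push_neg at hnt
    obtain ⟨u, c, hc2⟩ := hnt
    have hcne : c.edges ≠ [] := by
      have h3 := hc2.three_le_length
      have : c.edges.length = c.length := c.length_edges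
      intro h
      rw [h] at this
      simp at this
      omega
    obtain ⟨e', he'⟩ := List.exists_mem_of_ne_nil c.edges hcne
    obtain ⟨x, y, he'⟩ := Sym2.exists.mp ⟨e', he'⟩
    have hadjxy : G.Adj x y ∧ (G \ SimpleGraph.fromEdgeSet {s(x, y)}).Reachable x y :=
      SimpleGraph.adj_and_reachable_delete_edges_iff_exists_cycle.mpr ⟨u, c, hc2, he'⟩
    have hconn' : (G.deleteEdges {s(x, y)}).Connected := connected_deleteEdges hG hadjxy.2
    have h1 := connected_card_le (G.deleteEdges {s(x, y)}) hconn'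
    have hFinj : Function.Injective F := by
      intro a b hab
      rw [hF, Sym2.eq_iff] at hab
      rcases hab with ⟨h1, _⟩ | ⟨h1, h2⟩
      · exact Subtype.ext h1
      · have ha := hdist a
        have hb := hdist b
        rw [h2] at ha
        rw [← h1] at hb
        omega
    have hsurj : Function.Surjective (fun w => (⟨F w, hFedge w⟩ : G.edgeSet)) := by
      rintro ⟨e, he⟩
      obtain ⟨w, hw⟩ := hcon e he
      exact ⟨w, Subtype.ext hw⟩
    have hcard1 : Fintype.card G.edgeSet ≤ Fintype.card {w : V // w ≠ v} :=
      Fintype.card_le_of_surjective _ hsurj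
    have hcv : Fintype.card {w : V // w ≠ v} = Fintype.card V - 1 := by
      rw [Fintype.card_subtype_compl, Fintype.card_subtype_eq]
    have hlt : (G.deleteEdges {s(x, y)}).edgeFinset.card < G.edgeFinset.card := by
      apply Finset.card_lt_card
      rw [Finset.ssubset_iff_of_subset (SimpleGraph.edgeFinset_mono (G.deleteEdges_le _))]
      exact ⟨s(x, y), by simp [hadjxy.1], by simp [SimpleGraph.mem_edgeFinset,
        SimpleGraph.edgeSet_deleteEdges]⟩
    have hcard2 : G.edgeFinset.card = Fintype.card G.edgeSet := SimpleGraph.edgeFinset_card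
    have hpos : 1 ≤ Fintype.card V := @Fintype.card_pos _ _ ⟨v⟩
    omega
  obtain ⟨e, he, hre⟩ := hex
  refine ⟨e, he, ?_⟩
  have key : ∀ n, ∀ w, G.dist v w = n → (G.deleteEdges {e}).edist v w ≤ (n : ℕ∞) := by
    intro n
    induction n using Nat.strong_induction_on with
    | _ n ih =>
      intro w hwn
      rcases eq_or_ne w v with rfl | hwv
      · simp [SimpleGraph.edist_self]
      · have hd : G.dist v (par ⟨w, hwv⟩) + 1 = G.dist v w := hdist ⟨w, hwv⟩
        have ha : G.Adj (par ⟨w, hwv⟩) w := hadj ⟨w, hwv⟩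
        have hne : s(par ⟨w, hwv⟩, w) ≠ e := by
          intro h
          exact hre ⟨⟨w, hwv⟩, by rw [← h, Sym2.eq_swap]⟩
        have hadj' : (G.deleteEdges {e}).Adj (par ⟨w, hwv⟩) w :=
          SimpleGraph.deleteEdges_adj.mpr ⟨ha, by simpa using hne⟩
        have h1 : (G.deleteEdges {e}).edist v (par ⟨w, hwv⟩) ≤ ((n - 1 : ℕ) : ℕ∞) :=
          ih (n - 1) (by omega) _ (by omega)
        calc (G.deleteEdges {e}).edist v w
            ≤ (G.deleteEdges {e}).edist v (par ⟨w, hwv⟩)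
              + (G.deleteEdges {e}).edist (par ⟨w, hwv⟩) w := SimpleGraph.edist_triangle
          _ ≤ ((n - 1 : ℕ) : ℕ∞) + 1 :=
              add_le_add h1 (le_of_eq (SimpleGraph.edist_eq_one_iff_adj.mpr hadj'))
          _ = (n : ℕ∞) := by
              have hn : (n - 1) + 1 = n := by omega
              exact_mod_cast congrArg (Nat.cast : ℕ → ℕ∞) hn
  intro w
  have h2 := key (G.dist v w) w rfl
  have h3 : G.edist v w = (G.dist v w : ℕ∞) := by
    rw [SimpleGraph.dist]
    exact (ENat.coe_toNat (SimpleGraph.edist_ne_top_iff_reachable.mpr (hG v w))).symm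
  rw [h3]
  exact h2

/-- a connected graph with at least one edge is radius-minimal
iff it is a tree. (Radius is valued in `ℕ∞`, so deleting a bridge makes the
radius `⊤`, which strictly exceeds the finite radius of `G`.) -/
theorem stmt10 {V : Type*} [Fintype V] (G : SimpleGraph V) (hG : G.Connected)
    (hE : G.edgeSet.Nonempty) :
    (∀ e ∈ G.edgeSet, eradius G < eradius (G.deleteEdges {e})) ↔ G.IsTree := by
  classical
  have hne : Nonempty V := hG.nonempty
  constructor
  · intro h
    refine ⟨hG, ?_⟩
    by_contra hnt
    obtain ⟨v, -, hv⟩ := Finset.exists_min_image Finset.univ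
      (fun v => ⨆ w, G.edist v w) ⟨hne.some, Finset.mem_univ _⟩
    obtain ⟨e, he, hsafe⟩ := exists_safe_edge hG hnt v
    have h1 := h e he
    have h2 : eradius (G.deleteEdges {e}) ≤ eradius G := by
      have ha : eradius (G.deleteEdges {e}) ≤ ⨆ w, (G.deleteEdges {e}).edist v w :=
        iInf_le _ v
      have hb : (⨆ w, (G.deleteEdges {e}).edist v w) ≤ ⨆ w, G.edist v w :=
        iSup_mono hsafe
      have hc : eradius G = ⨆ w, G.edist v w :=
        le_antisymm (iInf_le _ v) (le_iInf fun u => hv u (Finset.mem_univ u))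
      rw [hc]
      exact ha.trans hb
    exact absurd h1 (not_lt.mpr h2)
  · intro hT e he
    revert he
    induction e using Sym2.ind with
    | _ x y =>
      intro he
      have hb : G.IsBridge s(x, y) :=
        SimpleGraph.isAcyclic_iff_forall_edge_isBridge.mp hT.IsAcyclic he
      rw [SimpleGraph.isBridge_iff] at hb
      have hnr : ¬ (G.deleteEdges {s(x, y)}).Reachable x y := hb
      have htop : eradius (G.deleteEdges {s(x, y)}) = ⊤ := by
        rw [eradius, iInf_eq_top]
        intro u
        have hd : ¬ (G.deleteEdges {s(x, y)}).Reachable u x ∨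
            ¬ (G.deleteEdges {s(x, y)}).Reachable u y := by
          by_contra hcc
          push_neg at hcc
          exact hnr (hcc.1.symm.trans hcc.2)
        rcases hd with h' | h'
        · exact top_unique ((SimpleGraph.edist_eq_top_of_not_reachable h') ▸
            le_iSup (fun w => (G.deleteEdges {s(x, y)}).edist u w) x)
        · exact top_unique ((SimpleGraph.edist_eq_top_of_not_reachable h') ▸
            le_iSup (fun w => (G.deleteEdges {s(x, y)}).edist u w) y)
      have hfin : eradius G ≠ ⊤ := by
        obtain ⟨w0, -, hw0⟩ := Finset.exists_max_image Finset.univ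
          (fun w => G.edist hne.some w) ⟨hne.some, Finset.mem_univ _⟩
        have h1 : eradius G ≤ G.edist hne.some w0 :=
          le_trans (iInf_le _ hne.some) (iSup_le fun w => hw0 w (Finset.mem_univ w))
        intro h
        rw [h] at h1
        exact (SimpleGraph.edist_ne_top_iff_reachable.mpr (hG hne.some w0))
          (top_le_iff.mp h1)
      rw [htop]
      exact lt_top_iff_ne_top.mpr hfin
end

section
/- If G is a connected graph that is not a tree, then r(G) = min over e ∈ E(G) of r(G − e). -/
open SimpleGraph Finset

-- parent lemma
theorem parent_exists {V : Type*} (G : SimpleGraph V) {c w : V} (hr : G.Reachable c w)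
    (hne : w ≠ c) : ∃ p, G.Adj p w ∧ G.edist c p + 1 = G.edist c w := by
  obtain ⟨P, hP⟩ := hr.exists_walk_length_eq_edist
  have hlen : P.length ≠ 0 := by
    intro h0
    exact hne (SimpleGraph.Walk.eq_of_length_eq_zero h0).symm
  have hnn : ¬ P.reverse.Nil := by
    rw [SimpleGraph.Walk.not_nil_iff_lt_length, SimpleGraph.Walk.length_reverse]
    omega
  obtain ⟨p, hwp, q, hq⟩ := SimpleGraph.Walk.not_nil_iff.mp hnn
  refine ⟨p, hwp.symm, ?_⟩
  have h1 : G.edist c p ≤ (q.length : ℕ∞) := by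
    simpa using q.reverse.edist_le
  have hlq : P.length = q.length + 1 := by
    have := congrArg SimpleGraph.Walk.length hq
    simpa [SimpleGraph.Walk.length_reverse] using this
  have h2 : G.edist c w ≤ G.edist c p + 1 := by
    calc G.edist c w ≤ G.edist c p + G.edist p w := SimpleGraph.edist_triangle
    _ = G.edist c p + 1 := by rw [edist_eq_one_iff_adj.mpr hwp.symm]
  have h3 : G.edist c p + 1 ≤ G.edist c w := by
    calc G.edist c p + 1 ≤ (q.length : ℕ∞) + 1 := by exact add_le_add_left h1 1
    _ = ((q.length + 1 : ℕ) : ℕ∞) := by push_cast; ring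
    _ = (P.length : ℕ∞) := by rw [hlq]
    _ = G.edist c w := hP
  exact le_antisymm h3 h2

theorem exists_nonparent_edge {V : Type*} [Fintype V] (G : SimpleGraph V) (hG : G.Connected)
    (hnt : ¬G.IsTree) (c : V) (par : V → V)
    (hpar : ∀ w, w ≠ c → G.Adj (par w) w ∧ G.edist c (par w) + 1 = G.edist c w) :
    ∃ e ∈ G.edgeSet, ∀ w, w ≠ c → e ≠ s(par w, w) := by
  classical
  by_contra hcon
  push_neg at hcon
  have hall : ∀ e ∈ G.edgeSet, ∃ w, w ≠ c ∧ e = s(par w, w) := hcon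
  -- get a cycle
  have hac : ¬ G.IsAcyclic := fun h => hnt ⟨hG, h⟩
  simp only [SimpleGraph.IsAcyclic, not_forall, not_not] at hac
  obtain ⟨v, C, hC⟩ := hac
  -- pick x in support maximizing edist c
  have hsne : C.support.toFinset.Nonempty :=
    ⟨v, List.mem_toFinset.mpr C.start_mem_support⟩
  obtain ⟨x, hxmem, hxmax⟩ := Finset.exists_max_image C.support.toFinset (fun u => G.edist c u) hsne
  rw [List.mem_toFinset] at hxmem
  have hmax : ∀ u ∈ C.support, G.edist c u ≤ G.edist c x := by
    intro u hu
    exact hxmax u (List.mem_toFinset.mpr hu)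
  -- rotate the cycle at x
  set D := C.rotate x hxmem with hD
  have hDC : D.IsCycle := hC.rotate hxmem
  have hDsupp : ∀ u ∈ D.support, u ∈ C.support := by
    intro u hu
    rw [D.support_eq_cons, List.mem_cons] at hu
    rcases hu with rfl | h
    · exact hxmem
    · have := (SimpleGraph.Walk.support_rotate C x hxmem).mem_iff.mp h
      rw [C.support_eq_cons]
      exact List.mem_cons_of_mem _ this
  -- helper: child of a support edge incident to x must be x
  have hchild : ∀ y : V, s(x, y) ∈ D.edges → y ∈ D.support → par x = y ∧ x ≠ c := by
    intro y hmem hysupp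
    obtain ⟨w, hwc, hw⟩ := hall s(x, y) (D.edges_subset_edgeSet hmem)
    rw [Sym2.eq_iff] at hw
    have hxnetop : G.edist c x ≠ ⊤ :=
      (SimpleGraph.edist_ne_top_iff_reachable).mpr (hG c x)
    rcases hw with ⟨h1, h2⟩ | ⟨h1, h2⟩
    · -- x = par w, y = w : child is y, so edist c y = edist c x + 1 > edist c x : contra
      exfalso
      subst h2
      have : G.edist c x + 1 = G.edist c y := by
        rw [h1]
        exact (hpar _ hwc).2
      have hle : G.edist c y ≤ G.edist c x := hmax y (hDsupp y hysupp)
      have : G.edist c x + 1 ≤ G.edist c x := this ▸ hle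
      have := (ENat.add_one_le_iff hxnetop).mp this
      exact absurd this (lt_irrefl _)
    · -- w = x, par x = y
      subst h1
      exact ⟨h2.symm, hwc⟩
  -- decompose D
  have hDlen : 3 ≤ D.length := hDC.three_le_length
  have hDnn : ¬ D.Nil := by
    rw [SimpleGraph.Walk.not_nil_iff_lt_length]
    omega
  obtain ⟨y, hxy, q, hq⟩ := SimpleGraph.Walk.not_nil_iff.mp hDnn
  have hyD : s(x, y) ∈ D.edges := by rw [hq]; simp
  have hysupp : y ∈ D.support := by
    rw [hq, SimpleGraph.Walk.support_cons]
    exact List.mem_cons_of_mem _ q.start_mem_support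
  have hpx : par x = y := (hchild y hyD hysupp).1
  have hqlen : q.length = D.length - 1 := by
    have := congrArg SimpleGraph.Walk.length hq
    simp [SimpleGraph.Walk.length_cons] at this
    omega
  have hqnn : ¬ q.reverse.Nil := by
    rw [SimpleGraph.Walk.not_nil_iff_lt_length, SimpleGraph.Walk.length_reverse]
    omega
  obtain ⟨z, hxz, q2, hq2⟩ := SimpleGraph.Walk.not_nil_iff.mp hqnn
  have hzq : s(x, z) ∈ q.edges := by
    have : s(x, z) ∈ q.reverse.edges := by rw [hq2]; simp
    rwa [SimpleGraph.Walk.edges_reverse, List.mem_reverse] at this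
  have hzD : s(x, z) ∈ D.edges := by
    rw [hq, SimpleGraph.Walk.edges_cons]
    exact List.mem_cons_of_mem _ hzq
  have hzsupp : z ∈ D.support := by
    have : z ∈ q.reverse.support := by
      rw [hq2, SimpleGraph.Walk.support_cons]
      exact List.mem_cons_of_mem _ q2.start_mem_support
    rw [SimpleGraph.Walk.support_reverse, List.mem_reverse] at this
    rw [hq, SimpleGraph.Walk.support_cons]
    exact List.mem_cons_of_mem _ this
  have hpz : par x = z := (hchild z hzD hzsupp).1
  have hyz : y = z := hpx ▸ hpz
  -- contradiction with nodup edges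
  have hnodup : D.edges.Nodup := hDC.edges_nodup
  rw [hq, SimpleGraph.Walk.edges_cons, List.nodup_cons] at hnodup
  exact hnodup.1 (hyz ▸ hzq)

/-- for a connected non-tree `G`,
`r(G) = min_{e ∈ E(G)} r(G - e)` (radius valued in `ℕ∞`). -/
theorem stmt11 {V : Type*} [Fintype V] (G : SimpleGraph V) (hG : G.Connected)
    (hnt : ¬ G.IsTree) :
    eradius G = ⨅ e : G.edgeSet, eradius (G.deleteEdges {(e : Sym2 V)}) := by
  classical
  haveI : Nonempty V := hG.nonempty
  obtain ⟨c, -, hc⟩ := Finset.exists_min_image Finset.univ (fun v => ⨆ w, G.edist v w)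
    ⟨Classical.arbitrary V, Finset.mem_univ _⟩
  have hcmin : ∀ v, (⨆ w, G.edist c w) ≤ ⨆ w, G.edist v w := fun v => hc v (Finset.mem_univ v)
  have hrad : eradius G = ⨆ w, G.edist c w := le_antisymm (iInf_le _ c) (le_iInf hcmin)
  have hparex : ∀ w, w ≠ c → ∃ p, G.Adj p w ∧ G.edist c p + 1 = G.edist c w :=
    fun w hw => parent_exists G (hG c w) hw
  let par : V → V := fun w => if h : w = c then w else (hparex w h).choose
  have hpar : ∀ w, w ≠ c → G.Adj (par w) w ∧ G.edist c (par w) + 1 = G.edist c w := by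
    intro w hw
    simp only [par, dif_neg hw]
    exact (hparex w hw).choose_spec
  obtain ⟨e, heE, hene⟩ := exists_nonparent_edge G hG hnt c par hpar
  set G' := G.deleteEdges {e} with hG'
  have key : ∀ n : ℕ, ∀ w, G.edist c w = n → G'.edist c w ≤ n := by
    intro n
    induction n using Nat.strong_induction_on with
    | _ n ih =>
      intro w hw
      by_cases hwc : w = c
      · subst hwc
        simp [SimpleGraph.edist_self]
      · obtain ⟨hadj, hsum⟩ := hpar w hwc
        have hptop : G.edist c (par w) ≠ ⊤ := by
          intro h
          rw [h, hw] at hsum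
          simp at hsum
        lift G.edist c (par w) to ℕ using hptop with m hm
        rw [hw] at hsum
        have hmn : m + 1 = n := by exact_mod_cast hsum
        have h1 : G'.edist c (par w) ≤ m := ih m (by omega) (par w) hm.symm
        have h2 : G'.Adj (par w) w := by
          show (G.deleteEdges {e}).Adj (par w) w
          rw [SimpleGraph.deleteEdges_adj]
          refine ⟨hadj, ?_⟩
          simp only [Set.mem_singleton_iff]
          exact fun hh => hene w hwc hh.symm
        calc G'.edist c w ≤ G'.edist c (par w) + G'.edist (par w) w := SimpleGraph.edist_triangle
          _ ≤ m + 1 := add_le_add h1 (le_of_eq (edist_eq_one_iff_adj.mpr h2))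
          _ = (n : ℕ∞) := by exact_mod_cast hmn
  have hle : ∀ w, G'.edist c w ≤ G.edist c w := by
    intro w
    have hne : G.edist c w ≠ ⊤ := (SimpleGraph.edist_ne_top_iff_reachable).mpr (hG c w)
    obtain ⟨n, hn⟩ := WithTop.ne_top_iff_exists.mp hne
    rw [← hn]
    exact key n w hn.symm
  apply le_antisymm
  · exact le_iInf fun e' =>
      iInf_mono fun v => iSup_mono fun w => SimpleGraph.edist_anti (G.deleteEdges_le _)
  · calc (⨅ e' : G.edgeSet, eradius (G.deleteEdges {(e' : Sym2 V)}))
        ≤ eradius G' :=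
          iInf_le (fun e' : G.edgeSet => eradius (G.deleteEdges {(e' : Sym2 V)})) ⟨e, heE⟩
      _ ≤ ⨆ w, G'.edist c w := iInf_le (fun v => ⨆ w, G'.edist v w) c
      _ ≤ ⨆ w, G.edist c w := iSup_mono hle
      _ = eradius G := hrad.symm
end

section
/- There exists a graph G with two vertices u, v such that G − u ≅ G − v but no automorphism of G maps u to v (i.e., pseudo-similar vertices exist). Moreover, for such a G one can have a rooted graph F^x with s(F^x, G^u) ≠ s(F^x, G^v). -/
open SimpleGraph Finset

def Grel : Fin 8 → Fin 8 → Bool := fun i j =>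
  let e : List (Fin 8 × Fin 8) :=
    [(0,3),(0,4),(0,7),(1,2),(1,5),(1,6),(2,4),(2,6),(3,4),(3,5)]
  e.any (fun p => (p.1 = i ∧ p.2 = j) ∨ (p.1 = j ∧ p.2 = i))

def G8 : SimpleGraph (Fin 8) where
  Adj i j := Grel i j
  symm := by
    have h : ∀ i j : Fin 8, Grel i j → Grel j i := by decide
    exact ⟨fun i j => h i j⟩
  loopless := by
    have h : ∀ i : Fin 8, ¬ Grel i i := by decide
    exact ⟨fun i => h i⟩

instance : DecidableRel G8.Adj := fun i j => by unfold G8; infer_instance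

instance (v : Fin 8) : DecidableRel (deleteVert G8 v).Adj := fun a b =>
  inferInstanceAs (Decidable (G8.Adj a.1 b.1))

def fmap : Fin 8 → Fin 8
  | 0 => 1 | 1 => 0 | 2 => 0 | 3 => 2 | 4 => 6 | 5 => 4 | 6 => 7 | 7 => 5
def gmap : Fin 8 → Fin 8
  | 0 => 1 | 1 => 0 | 2 => 3 | 3 => 0 | 4 => 5 | 5 => 7 | 6 => 4 | 7 => 6

def delIso : deleteVert G8 2 ≃g deleteVert G8 3 where
  toFun w := ⟨fmap w.1, by revert w; decide⟩
  invFun w := ⟨gmap w.1, by revert w; decide⟩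
  left_inv := by decide
  right_inv := by decide
  map_rel_iff' := by
    have h : ∀ a b : {w : Fin 8 // w ∈ ({w | w ≠ 2} : Set (Fin 8))},
        (deleteVert G8 3).Adj ⟨fmap a.1, by revert a; decide⟩ ⟨fmap b.1, by revert b; decide⟩ ↔
          (deleteVert G8 2).Adj a b := by decide
    intro a b; exact h a b

/-- the "adjacent to a triangle avoiding self" invariant -/
def TriFlag (x : Fin 8) : Prop :=
  ∃ a b c : Fin 8, G8.Adj x a ∧ G8.Adj a b ∧ G8.Adj a c ∧ G8.Adj b c ∧ b ≠ x ∧ c ≠ x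

instance (x : Fin 8) : Decidable (TriFlag x) := by unfold TriFlag; infer_instance

lemma triflag2 : TriFlag 2 := by decide
lemma not_triflag3 : ¬ TriFlag 3 := by decide

lemma no_auto : ¬ ∃ g : G8 ≃g G8, g 2 = 3 := by
  rintro ⟨g, hg⟩
  obtain ⟨a, b, c, h1, h2, h3, h4, hb, hc⟩ := triflag2
  refine not_triflag3 ⟨g a, g b, g c, ?_, ?_, ?_, ?_, ?_, ?_⟩
  · rw [← hg]; exact g.map_rel_iff.mpr h1
  · exact g.map_rel_iff.mpr h2
  · exact g.map_rel_iff.mpr h3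
  · exact g.map_rel_iff.mpr h4
  · rw [← hg]; exact fun h => hb (g.toEquiv.injective h)
  · rw [← hg]; exact fun h => hc (g.toEquiv.injective h)

-- the paw graph, pendant vertex 0, center 1, triangle 1,2,3
def Prel : Fin 4 → Fin 4 → Bool := fun i j =>
  let e : List (Fin 4 × Fin 4) := [(0,1),(1,2),(1,3),(2,3)]
  e.any (fun p => (p.1 = i ∧ p.2 = j) ∨ (p.1 = j ∧ p.2 = i))

def Paw : SimpleGraph (Fin 4) where
  Adj i j := Prel i j
  symm := by
    have h : ∀ i j : Fin 4, Prel i j → Prel j i := by decide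
    exact ⟨fun i j => h i j⟩
  loopless := by
    have h : ∀ i : Fin 4, ¬ Prel i i := by decide
    exact ⟨fun i => h i⟩

instance : DecidableRel Paw.Adj := fun i j => by unfold Paw; infer_instance

instance : Finite G8.Subgraph :=
  Finite.of_injective (fun H => (H.verts, H.Adj))
    (fun H1 H2 h => SimpleGraph.Subgraph.ext (congrArg Prod.fst h) (congrArg Prod.snd h))

instance : IsEmpty {H : G8.Subgraph //
    ∃ hv : (3 : Fin 8) ∈ H.verts, ∃ e : H.coe ≃g Paw, e ⟨3, hv⟩ = 0} := by
  constructor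
  rintro ⟨H, hv, e, he⟩
  have h0 : e.symm 0 = ⟨3, hv⟩ := by rw [← he]; exact e.symm_apply_apply _
  have hA1 : H.coe.Adj (e.symm 0) (e.symm 1) := e.symm.map_rel_iff.mpr (by decide)
  have hA2 : H.coe.Adj (e.symm 1) (e.symm 2) := e.symm.map_rel_iff.mpr (by decide)
  have hA3 : H.coe.Adj (e.symm 1) (e.symm 3) := e.symm.map_rel_iff.mpr (by decide)
  have hA4 : H.coe.Adj (e.symm 2) (e.symm 3) := e.symm.map_rel_iff.mpr (by decide)
  refine not_triflag3 ⟨(e.symm 1).1, (e.symm 2).1, (e.symm 3).1, ?_, ?_, ?_, ?_, ?_, ?_⟩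
  · have := H.adj_sub hA1; rwa [h0] at this
  · exact H.adj_sub hA2
  · exact H.adj_sub hA3
  · exact H.adj_sub hA4
  · intro h
    have : e.symm 2 = e.symm 0 := by rw [h0]; exact Subtype.ext h
    exact absurd (e.symm.toEquiv.injective this) (by decide)
  · intro h
    have : e.symm 3 = e.symm 0 := by rw [h0]; exact Subtype.ext h
    exact absurd (e.symm.toEquiv.injective this) (by decide)

def Hrel : Fin 8 → Fin 8 → Bool := fun i j =>
  let e : List (Fin 8 × Fin 8) := [(2,4),(4,0),(4,3),(0,3)]
  e.any (fun p => (p.1 = i ∧ p.2 = j) ∨ (p.1 = j ∧ p.2 = i))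

def H0 : G8.Subgraph where
  verts := {w | w = 0 ∨ w = 2 ∨ w = 3 ∨ w = 4}
  Adj i j := Hrel i j
  adj_sub := by
    have h : ∀ i j : Fin 8, Hrel i j → G8.Adj i j := by decide
    exact fun {i j} => h i j
  edge_vert := by
    have h : ∀ i j : Fin 8, Hrel i j → (i = 0 ∨ i = 2 ∨ i = 3 ∨ i = 4) := by decide
    exact fun {i j} => h i j
  symm := by
    have h : ∀ i j : Fin 8, Hrel i j → Hrel j i := by decide
    exact ⟨fun i j => h i j⟩

instance : DecidableRel H0.coe.Adj := fun a b =>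
  inferInstanceAs (Decidable (Hrel a.1 b.1 = true))

instance : DecidablePred (· ∈ H0.verts) := fun w =>
  inferInstanceAs (Decidable (w = 0 ∨ w = 2 ∨ w = 3 ∨ w = 4))

def pmap : Fin 8 → Fin 4
  | 2 => 0 | 4 => 1 | 0 => 2 | 3 => 3 | _ => 0
def qmap : Fin 4 → Fin 8
  | 0 => 2 | 1 => 4 | 2 => 0 | 3 => 3

def e0 : H0.coe ≃g Paw where
  toFun w := pmap w.1
  invFun y := ⟨qmap y, by revert y; decide⟩
  left_inv := by decide
  right_inv := by decide
  map_rel_iff' := by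
    have h : ∀ a b : H0.verts, Paw.Adj (pmap a.1) (pmap b.1) ↔ H0.coe.Adj a b := by decide
    intro a b; exact h a b

lemma pos_side : rootedCountAt Paw 0 G8 2 ≠ 0 := by
  have hne : Nonempty {H : G8.Subgraph //
      ∃ hv : (2 : Fin 8) ∈ H.verts, ∃ e : H.coe ≃g Paw, e ⟨2, hv⟩ = 0} :=
    ⟨⟨H0, Or.inr (Or.inl rfl), e0, rfl⟩⟩
  unfold rootedCountAt
  exact Nat.card_pos.ne'

lemma zero_side : rootedCountAt Paw 0 G8 3 = 0 := by
  unfold rootedCountAt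
  exact Nat.card_of_isEmpty


/-- pseudo-similar vertices exist, and the rooted subgraph counts
at them can differ. -/
theorem stmt16 :
    ∃ (V : Type) (_ : Fintype V) (G : SimpleGraph V) (u v : V),
      Nonempty (deleteVert G u ≃g deleteVert G v) ∧
      (¬ ∃ g : G ≃g G, g u = v) ∧
      ∃ (W : Type) (_ : Fintype W) (F : SimpleGraph W) (x : W),
        rootedCountAt F x G u ≠ rootedCountAt F x G v := by
  refine ⟨Fin 8, inferInstance, G8, 2, 3, ⟨delIso⟩, no_auto,
    Fin 4, inferInstance, Paw, 0, ?_⟩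
  rw [zero_side]; exact pos_side
end
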